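/- Let S be a q×q real symmetric positive definite matrix, let η ≥ 0, and set β = η/(1+η). Then the matrix Σ̂ = (1−β)S + βI_q is the unique minimizer, over all q×q real symmetric positive definite matrices Σ, of the function Σ ↦ tr(Σ⁻¹S) + log det(Σ) + η·(tr(Σ⁻¹) + log det(Σ)). -/

import Mathlib

open Matrix

section Aux

variable {q : ℕ}

private lemma lw_trace_eq_sum {A : Matrix (Fin q) (Fin q) ℝ} (hA : A.IsHermitian) :
    A.trace = ∑ i, hA.eigenvalues i := by
  nth_rewrite 1 [hA.spectral_theorem]
  rw [Unitary.conjStarAlgAut_apply, Matrix.trace_mul_cycle, Unitary.coe_star_mul_self, one_mul, trace_diagonal]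
  simp

private lemma lw_eq_one_of_eigenvalues {A : Matrix (Fin q) (Fin q) ℝ} (hA : A.IsHermitian)
    (h : ∀ i, hA.eigenvalues i = 1) : A = 1 := by
  rw [hA.spectral_theorem]
  have : (RCLike.ofReal ∘ hA.eigenvalues : Fin q → ℝ) = fun _ => 1 := by
    funext i; simp [h i]
  rw [this, diagonal_one, Unitary.conjStarAlgAut_apply, mul_one]
  exact (Matrix.mem_unitaryGroup_iff).mp hA.eigenvectorUnitary.2

private lemma lw_posDef_smul {P : Matrix (Fin q) (Fin q) ℝ} (hP : P.PosDef) {c : ℝ}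
    (hc : 0 < c) : (c • P).PosDef := by
  refine Matrix.PosDef.of_dotProduct_mulVec_pos ?_ fun x hx => ?_
  · unfold Matrix.IsHermitian
    rw [conjTranspose_smul, hP.1.eq]
    simp
  · rw [smul_mulVec, dotProduct_smul, smul_eq_mul]
    exact mul_pos hc (hP.dotProduct_mulVec_pos hx)

private lemma lw_posSemidef_smul {P : Matrix (Fin q) (Fin q) ℝ} (hP : P.PosSemidef) {c : ℝ}
    (hc : 0 ≤ c) : (c • P).PosSemidef := by
  refine Matrix.PosSemidef.of_dotProduct_mulVec_nonneg ?_ fun x => ?_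
  · unfold Matrix.IsHermitian
    rw [conjTranspose_smul, hP.1.eq]
    simp
  · rw [smul_mulVec, dotProduct_smul, smul_eq_mul]
    exact mul_nonneg hc (hP.dotProduct_mulVec_nonneg x)

private lemma lw_posDef_conj {P C : Matrix (Fin q) (Fin q) ℝ} (hP : P.PosDef)
    (hC : IsUnit C) : (Cᴴ * P * C).PosDef := by
  refine Matrix.PosDef.of_dotProduct_mulVec_pos (isHermitian_conjTranspose_mul_mul C hP.1) fun x hx => ?_
  have hx' : C *ᵥ x ≠ 0 := by
    intro h
    apply hx
    have hinj : Function.Injective C.mulVec := Matrix.mulVec_injective_iff_isUnit.2 hC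
    have : C *ᵥ x = C *ᵥ 0 := by rw [h, Matrix.mulVec_zero]
    exact hinj this
  simpa only [star_mulVec, dotProduct_mulVec, vecMul_vecMul] using hP.dotProduct_mulVec_pos hx'

/-- Key scalar inequality: for a positive definite `X`, `tr X - log det X ≥ q`,
with equality iff `X = 1`. -/
private lemma lw_key {X : Matrix (Fin q) (Fin q) ℝ} (hX : X.PosDef) :
    (q : ℝ) ≤ X.trace - Real.log X.det ∧
      (X.trace - Real.log X.det = (q : ℝ) → X = 1) := by
  have hev : ∀ i, 0 < hX.1.eigenvalues i := hX.eigenvalues_pos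
  have htr : X.trace = ∑ i, hX.1.eigenvalues i := lw_trace_eq_sum hX.1
  have hdet : X.det = ∏ i, hX.1.eigenvalues i := by
    have := hX.1.det_eq_prod_eigenvalues
    simpa using this
  have hlogdet : Real.log X.det = ∑ i, Real.log (hX.1.eigenvalues i) := by
    rw [hdet]
    exact Real.log_prod fun i _ => (hev i).ne'
  have hterm : ∀ i : Fin q, (1 : ℝ) ≤ hX.1.eigenvalues i - Real.log (hX.1.eigenvalues i) := by
    intro i
    have := Real.log_le_sub_one_of_pos (hev i)
    linarith
  have hsum : X.trace - Real.log X.det = ∑ i, (hX.1.eigenvalues i - Real.log (hX.1.eigenvalues i)) := by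
    rw [htr, hlogdet, Finset.sum_sub_distrib]
  constructor
  · rw [hsum]
    calc (q : ℝ) = ∑ _i : Fin q, (1 : ℝ) := by simp
    _ ≤ _ := Finset.sum_le_sum fun i _ => hterm i
  · intro heq
    have hqsum : (∑ _i : Fin q, (1 : ℝ)) = ∑ i, (hX.1.eigenvalues i - Real.log (hX.1.eigenvalues i)) := by
      rw [← hsum, heq]; simp
    have hall := (Finset.sum_eq_sum_iff_of_le (fun i _ => hterm i)).1 hqsum
    have hone : ∀ i, hX.1.eigenvalues i = 1 := by
      intro i
      by_contra hne
      have := Real.log_lt_sub_one_of_pos (hev i) hne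
      have h1 := hall i (Finset.mem_univ i)
      linarith
    exact lw_eq_one_of_eigenvalues hX.1 hone

end Aux

/-- the Ledoit–Wolf estimator `(1−β)S + βI` with `β = η/(1+η)` is the
unique minimizer over positive definite matrices of
`Σ ↦ tr(Σ⁻¹S) + log det Σ + η (tr(Σ⁻¹) + log det Σ)`. -/
theorem stmt_1 (q : ℕ) (S : Matrix (Fin q) (Fin q) ℝ) (hS : S.PosDef)
    (η : ℝ) (hη : 0 ≤ η) (β : ℝ) (hβ : β = η / (1 + η))
    (Sighat : Matrix (Fin q) (Fin q) ℝ)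
    (hSighat : Sighat = (1 - β) • S + β • (1 : Matrix (Fin q) (Fin q) ℝ))
    (F : Matrix (Fin q) (Fin q) ℝ → ℝ)
    (hF : ∀ A : Matrix (Fin q) (Fin q) ℝ,
      F A = (A⁻¹ * S).trace + Real.log A.det + η * ((A⁻¹).trace + Real.log A.det)) :
    Sighat.PosDef ∧
    ∀ A : Matrix (Fin q) (Fin q) ℝ, A.PosDef →
      F Sighat ≤ F A ∧ (F A = F Sighat → A = Sighat) := by
  have hc : (0:ℝ) < 1 + η := by linarith
  set M : Matrix (Fin q) (Fin q) ℝ := S + η • (1 : Matrix (Fin q) (Fin q) ℝ) with hMdef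
  have hMpd : M.PosDef :=
    hS.add_posSemidef (lw_posSemidef_smul (Matrix.PosDef.one).posSemidef hη)
  have hSig : Sighat = (1 + η)⁻¹ • M := by
    rw [hSighat, hMdef, smul_add, smul_smul]
    congr 1
    · congr 1
      rw [hβ]
      field_simp
      ring
    · congr 1
      rw [hβ]
      field_simp
  have hSigpd : Sighat.PosDef := by
    rw [hSig]
    exact lw_posDef_smul hMpd (inv_pos.2 hc)
  have hMc : M = (1 + η) • Sighat := by
    rw [hSig, smul_smul, mul_inv_cancel₀ hc.ne', one_smul]
  -- general formula for F on positive definite matrices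
  have hform : ∀ A : Matrix (Fin q) (Fin q) ℝ, A.PosDef →
      F A = (1 + η) * ((A⁻¹ * Sighat).trace + Real.log A.det) := by
    intro A hA
    have h1 : A⁻¹ * M = A⁻¹ * S + η • A⁻¹ := by
      rw [hMdef, Matrix.mul_add, Matrix.mul_smul, mul_one]
    have h2 : A⁻¹ * M = (1 + η) • (A⁻¹ * Sighat) := by
      rw [hMc, Matrix.mul_smul]
    have h3 : (A⁻¹ * S).trace + η * (A⁻¹).trace = (1 + η) * (A⁻¹ * Sighat).trace := by
      have := congrArg Matrix.trace (h1.symm.trans h2)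
      simpa [Matrix.trace_add, Matrix.trace_smul, smul_eq_mul] using this
    rw [hF A]
    ring_nf
    ring_nf at h3
    linarith
  have hSigdet : 0 < Sighat.det := hSigpd.det_pos
  have hSigunit : IsUnit Sighat.det := isUnit_iff_ne_zero.2 hSigdet.ne'
  have hFS : F Sighat = (1 + η) * ((q : ℝ) + Real.log Sighat.det) := by
    rw [hform Sighat hSigpd, Matrix.nonsing_inv_mul Sighat hSigunit, Matrix.trace_one]
    simp
  refine ⟨hSigpd, fun A hA => ?_⟩
  -- the square root of Sighat
  set R : Matrix (Fin q) (Fin q) ℝ := (open scoped MatrixOrder in CFC.sqrt Sighat) with hRdef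
  have hRH : R.IsHermitian := by
    open scoped MatrixOrder in exact (Matrix.nonneg_iff_posSemidef.mp (CFC.sqrt_nonneg Sighat)).1
  have hRR : R * R = Sighat := by
    open scoped MatrixOrder in exact CFC.sqrt_mul_sqrt_self Sighat (Matrix.nonneg_iff_posSemidef.mpr hSigpd.posSemidef)
  have hRdet : R.det ≠ 0 := by
    intro h0
    have : (R * R).det = 0 := by rw [Matrix.det_mul, h0, mul_zero]
    rw [hRR] at this
    exact hSigdet.ne' this
  have hRunit : IsUnit R := by
    rw [Matrix.isUnit_iff_isUnit_det]
    exact isUnit_iff_ne_zero.2 hRdet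
  set X : Matrix (Fin q) (Fin q) ℝ := R * A⁻¹ * R with hXdef
  have hXpd : X.PosDef := by
    have := lw_posDef_conj hA.inv hRunit
    rwa [hRH.eq] at this
  have hAdet : 0 < A.det := hA.det_pos
  have hAunit : IsUnit A.det := isUnit_iff_ne_zero.2 hAdet.ne'
  -- trace identity
  have htrX : X.trace = (A⁻¹ * Sighat).trace := by
    rw [hXdef, Matrix.trace_mul_cycle, hRR, Matrix.trace_mul_comm]
  -- det identity
  have hdetX : X.det = A.det⁻¹ * Sighat.det := by
    rw [hXdef, Matrix.det_mul, Matrix.det_mul, Matrix.det_nonsing_inv, Ring.inverse_eq_inv]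
    rw [← hRR, Matrix.det_mul]
    ring
  have hlogX : Real.log X.det = Real.log Sighat.det - Real.log A.det := by
    rw [hdetX, Real.log_mul (inv_ne_zero hAdet.ne') hSigdet.ne', Real.log_inv]
    ring
  have hFA : F A = (1 + η) * (X.trace + Real.log A.det) := by
    rw [hform A hA, htrX]
  have hkey := lw_key hXpd
  constructor
  · rw [hFA, hFS]
    apply mul_le_mul_of_nonneg_left _ hc.le
    have := hkey.1
    rw [hlogX] at this
    linarith
  · intro heq
    rw [hFA, hFS] at heq
    have h4 : X.trace + Real.log A.det = (q : ℝ) + Real.log Sighat.det :=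
      mul_left_cancel₀ hc.ne' heq
    have h5 : X.trace - Real.log X.det = (q : ℝ) := by
      rw [hlogX]; linarith
    have hX1 : X = 1 := hkey.2 h5
    -- from R * A⁻¹ * R = 1 deduce A = Sighat
    have hRiR : R⁻¹ * R = 1 := Matrix.nonsing_inv_mul R (isUnit_iff_ne_zero.2 hRdet)
    have hRRi : R * R⁻¹ = 1 := Matrix.mul_nonsing_inv R (isUnit_iff_ne_zero.2 hRdet)
    have hAinv : A⁻¹ = Sighat⁻¹ := by
      have h6 : R⁻¹ * (R * A⁻¹ * R) * R⁻¹ = R⁻¹ * R⁻¹ := by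
        rw [← hXdef, hX1, mul_one]
      have h7 : R⁻¹ * (R * A⁻¹ * R) * R⁻¹ = A⁻¹ := by
        rw [← Matrix.mul_assoc, ← Matrix.mul_assoc, hRiR, one_mul, Matrix.mul_assoc, hRRi,
          mul_one]
      rw [h7] at h6
      rw [h6, ← Matrix.mul_inv_rev, hRR]
    calc A = A⁻¹⁻¹ := (Matrix.nonsing_inv_nonsing_inv A hAunit).symm
    _ = Sighat⁻¹⁻¹ := by rw [hAinv]
    _ = Sighat := Matrix.nonsing_inv_nonsing_inv Sighat hSigunit
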